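/- Let γ > 0 and κ > 0, and let V : ℝ → ℝ be differentiable with V(t) ≥ 0 for all t ≥ 0 and V′(t) ≤ −2γ·V(t) + 2κ·√(V(t)) for all t ≥ 0. Then for all t ≥ 0, V(t) ≤ V(0)·exp(−γt) + (κ/γ)²·(1 − exp(−γt)). -/

import Mathlib

/-- Lyapunov comparison estimate: if `V ≥ 0` on `[0,∞)` is differentiable and
satisfies `V' ≤ -2γV + 2κ√V` there, then
`V(t) ≤ V(0) e^{-γt} + (κ/γ)² (1 - e^{-γt})` for all `t ≥ 0`. -/
theorem stmt10 (γ κ : ℝ) (hγ : 0 < γ) (hκ : 0 < κ)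
    (V : ℝ → ℝ) (hV : Differentiable ℝ V)
    (hVnn : ∀ t, 0 ≤ t → 0 ≤ V t)
    (hV' : ∀ t, 0 ≤ t → deriv V t ≤ -2 * γ * V t + 2 * κ * Real.sqrt (V t)) :
    ∀ t, 0 ≤ t →
      V t ≤ V 0 * Real.exp (-γ * t) + (κ / γ) ^ 2 * (1 - Real.exp (-γ * t)) := by
  -- linear comparison: V' ≤ -γ V + κ²/γ
  have key : ∀ t, 0 ≤ t → deriv V t ≤ -γ * V t + κ ^ 2 / γ := by
    intro t ht
    have hs : Real.sqrt (V t) ^ 2 = V t := Real.sq_sqrt (hVnn t ht)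
    have h1 := hV' t ht
    rw [← mul_le_mul_iff_right₀ hγ]
    have h2 : γ * (-γ * V t + κ ^ 2 / γ) = -γ ^ 2 * V t + κ ^ 2 := by
      field_simp
    rw [h2]
    nlinarith [sq_nonneg (γ * Real.sqrt (V t) - κ), mul_le_mul_of_nonneg_left h1 hγ.le]
  set h : ℝ → ℝ := fun t => κ ^ 2 / γ ^ 2 * Real.exp (γ * t) - V t * Real.exp (γ * t)
    with hh_def
  have hexp : ∀ t : ℝ, HasDerivAt (fun s => Real.exp (γ * s)) (γ * Real.exp (γ * t)) t := by
    intro t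
    have := (Real.hasDerivAt_exp (γ * t)).comp t ((hasDerivAt_id t).const_mul γ)
    simpa [mul_comm, Function.comp_def] using this
  have hderiv : ∀ t : ℝ, HasDerivAt h
      (κ ^ 2 / γ ^ 2 * (γ * Real.exp (γ * t))
        - (deriv V t * Real.exp (γ * t) + V t * (γ * Real.exp (γ * t)))) t := by
    intro t
    exact ((hexp t).const_mul (κ ^ 2 / γ ^ 2)).sub
      (((hV t).hasDerivAt).mul (hexp t))
  have hdiff : Differentiable ℝ h := fun t => (hderiv t).differentiableAt
  have hmono : MonotoneOn h (Set.Ici (0 : ℝ)) := by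
    apply monotoneOn_of_deriv_nonneg (convex_Ici 0) hdiff.continuous.continuousOn
      (fun t _ => (hdiff t).differentiableWithinAt)
    intro t ht
    rw [interior_Ici] at ht
    rw [(hderiv t).deriv]
    have hk := key t ht.le
    have hE : 0 < Real.exp (γ * t) := Real.exp_pos _
    have hγ2 : κ ^ 2 / γ ^ 2 * γ = κ ^ 2 / γ := by field_simp
    nlinarith [mul_le_mul_of_nonneg_right hk hE.le]
  intro t ht
  have h0t : h 0 ≤ h t := hmono Set.self_mem_Ici ht (by exact ht)
  simp only [hh_def, mul_zero, Real.exp_zero, mul_one] at h0t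
  -- h 0 = κ²/γ² - V 0 ≤ κ²/γ² e^{γt} - V t e^{γt}
  have hE : 0 < Real.exp (γ * t) := Real.exp_pos _
  have hEneg : Real.exp (-γ * t) = (Real.exp (γ * t))⁻¹ := by
    rw [← Real.exp_neg]; ring_nf
  have hq : (κ / γ) ^ 2 = κ ^ 2 / γ ^ 2 := by ring
  rw [hEneg, hq]
  rw [div_pow] at *
  have := mul_le_mul_of_nonneg_right h0t (inv_nonneg.mpr hE.le)
  have hEne : Real.exp (γ * t) ≠ 0 := hE.ne'
  calc V t = V t * Real.exp (γ * t) * (Real.exp (γ * t))⁻¹ := by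
        field_simp
    _ ≤ (κ ^ 2 / γ ^ 2 * Real.exp (γ * t) - (κ ^ 2 / γ ^ 2 - V 0)) * (Real.exp (γ * t))⁻¹ := by
        apply mul_le_mul_of_nonneg_right _ (inv_nonneg.mpr hE.le)
        linarith
    _ = V 0 * (Real.exp (γ * t))⁻¹ + κ ^ 2 / γ ^ 2 * (1 - (Real.exp (γ * t))⁻¹) := by
        field_simp
        ring
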